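/- For k1, k2 ≥ 1, if L(k1) = liminf_{d→∞} CC(d,k1)/d^{k1} and L(k2) = liminf_{d→∞} CC(d,k2)/d^{k2}, then liminf_{d→∞} CC(d, k1+k2)/d^{k1+k2} ≥ L(k1)·L(k2)·k1^{k1}·k2^{k2} / (k1+k2)^{k1+k2}. -/

import Mathlib

open Filter

/-- `Z_n` admits a symmetric connection set of size at most `d` (not containing `0`)
such that every element is a sum of at most `k` elements of it. -/
def HasUndirCirc (n d k : ℕ) : Prop :=
  ∃ S : Finset (ZMod n), (0 : ZMod n) ∉ S ∧ (∀ s ∈ S, -s ∈ S) ∧ S.card ≤ d ∧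
    ∀ x : ZMod n, ∃ l : List (ZMod n), l.length ≤ k ∧ (∀ a ∈ l, a ∈ S) ∧ l.sum = x

/-- The largest order of an undirected circulant graph of degree at most `d`
and diameter at most `k`. -/
noncomputable def CC (d k : ℕ) : ℕ := sSup {n | HasUndirCirc n d k}

/-- `L(k) = liminf_{d → ∞} CC(d,k)/d^k`. -/
noncomputable def L (k : ℕ) : ℝ := atTop.liminf fun d : ℕ => (CC d k : ℝ) / (d : ℝ) ^ k

lemma stitch {n1 n2 d1 d2 k1 k2 : ℕ} (hn1 : 0 < n1) (hn2 : 0 < n2)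
    (h1 : HasUndirCirc n1 d1 k1) (h2 : HasUndirCirc n2 d2 k2) :
    HasUndirCirc (n1 * n2) (d1 + d2 + 1) (k1 + k2) := by
  haveI : NeZero n1 := ⟨hn1.ne'⟩
  haveI : NeZero n2 := ⟨hn2.ne'⟩
  haveI : NeZero (n1 * n2) := ⟨by positivity⟩
  obtain ⟨S1, hS10, hS1neg, hS1card, hS1cov⟩ := h1
  obtain ⟨S2, hS20, hS2neg, hS2card, hS2cov⟩ := h2
  set N := n1 * n2 with hN
  have hn1N : n1 ≤ N := Nat.le_mul_of_pos_right n1 hn2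
  let π : ZMod N →+* ZMod n1 := ZMod.castHom (dvd_mul_right n1 n2) (ZMod n1)
  let f : ZMod n1 → ZMod N := fun s =>
    if 2 * s.val ≤ n1 then ((s.val : ℕ) : ZMod N) else -(((-s).val : ℕ) : ZMod N)
  let φ : ZMod n2 → ZMod N := fun y => ((n1 * y.val : ℕ) : ZMod N)
  have hπnat : ∀ a : ℕ, π ((a : ℕ) : ZMod N) = (a : ZMod n1) := fun a => map_natCast π a
  have hπf : ∀ s : ZMod n1, π (f s) = s := by
    intro s
    by_cases h : 2 * s.val ≤ n1
    · simp only [f, if_pos h, hπnat, ZMod.natCast_zmod_val]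
    · simp only [f, if_neg h, map_neg, hπnat, ZMod.natCast_zmod_val, neg_neg]
  have hmod : ∀ a : ℕ, ((n1 * (a % n2) : ℕ) : ZMod N) = ((n1 * a : ℕ) : ZMod N) := by
    intro a
    have h1' : n1 * a = N * (a / n2) + n1 * (a % n2) := by
      conv_lhs => rw [← Nat.div_add_mod a n2]
      rw [hN]; ring
    rw [h1']
    push_cast [ZMod.natCast_self]
    ring
  have hφadd : ∀ y z : ZMod n2, φ (y + z) = φ y + φ z := by
    intro y z
    show ((n1 * (y + z).val : ℕ) : ZMod N) = ((n1 * y.val : ℕ) : ZMod N) + ((n1 * z.val : ℕ) : ZMod N)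
    rw [ZMod.val_add, hmod]
    push_cast
    ring
  have hφzero : φ 0 = 0 := by simp [φ, ZMod.val_zero]
  have hφsum : ∀ l : List (ZMod n2), (l.map φ).sum = φ l.sum := by
    intro l
    induction l with
    | nil => simpa using hφzero.symm
    | cons a t ih => simp [List.sum_cons, ih, hφadd]
  -- the connection set
  set e : ZMod n1 := ((n1 / 2 : ℕ) : ZMod n1) with he
  set c : ZMod N := ((n1 / 2 : ℕ) : ZMod N) with hc
  set C : Finset (ZMod N) := if e ∈ S1 ∧ n1 % 2 = 0 then {-c} else ∅ with hC
  refine ⟨(S1.image f ∪ S2.image φ) ∪ C, ?_, ?_, ?_, ?_⟩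
  · -- 0 ∉ S
    intro h0
    rcases Finset.mem_union.1 h0 with h0 | h0
    · rcases Finset.mem_union.1 h0 with h0 | h0
      · obtain ⟨s, hs, hfs⟩ := Finset.mem_image.1 h0
        have hs0 : s ≠ 0 := fun h => hS10 (h ▸ hs)
        by_cases h : 2 * s.val ≤ n1
        · rw [show f s = ((s.val : ℕ) : ZMod N) from if_pos h] at hfs
          have hdvd := (ZMod.natCast_eq_zero_iff s.val N).1 hfs
          have hlt : s.val < N := lt_of_lt_of_le (ZMod.val_lt s) hn1N
          exact hs0 (by rw [← ZMod.val_eq_zero]; exact Nat.eq_zero_of_dvd_of_lt hdvd hlt)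
        · rw [show f s = -(((-s).val : ℕ) : ZMod N) from if_neg h] at hfs
          have hfs' : (((-s).val : ℕ) : ZMod N) = 0 := by rwa [neg_eq_zero] at hfs
          have hdvd := (ZMod.natCast_eq_zero_iff (-s).val N).1 hfs'
          have hlt : (-s).val < N := lt_of_lt_of_le (ZMod.val_lt _) hn1N
          have : (-s) = 0 := by
            rw [← ZMod.val_eq_zero]; exact Nat.eq_zero_of_dvd_of_lt hdvd hlt
          exact hs0 (by rwa [neg_eq_zero] at this)
      · obtain ⟨y, hy, hfy⟩ := Finset.mem_image.1 h0
        have hy0 : y ≠ 0 := fun h => hS20 (h ▸ hy)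
        have hdvd := (ZMod.natCast_eq_zero_iff (n1 * y.val) N).1 hfy
        rw [hN] at hdvd
        have := (Nat.mul_dvd_mul_iff_left hn1).1 hdvd
        have := Nat.eq_zero_of_dvd_of_lt this (ZMod.val_lt y)
        exact hy0 (by rwa [← ZMod.val_eq_zero])
    · by_cases hcond : e ∈ S1 ∧ n1 % 2 = 0
      · rw [hC, if_pos hcond, Finset.mem_singleton] at h0
        have hcc : c = 0 := by rwa [eq_comm, neg_eq_zero] at h0
        have hdvd := (ZMod.natCast_eq_zero_iff (n1 / 2) N).1 hcc
        have h2 : 2 ≤ n1 := by omega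
        have hpos : 0 < n1 / 2 := Nat.one_le_div_iff (by norm_num) |>.2 h2
        have := Nat.le_of_dvd hpos hdvd
        have : n1 / 2 < N := lt_of_lt_of_le (Nat.div_lt_self hn1 one_lt_two) hn1N
        omega
      · rw [hC, if_neg hcond] at h0
        exact absurd h0 (Finset.notMem_empty 0)
  · -- symmetric
    intro a ha
    rcases Finset.mem_union.1 ha with ha | ha
    · rcases Finset.mem_union.1 ha with ha | ha
      · obtain ⟨s, hs, rfl⟩ := Finset.mem_image.1 ha
        have hs0 : s ≠ 0 := fun h => hS10 (h ▸ hs)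
        have hsvalne : s.val ≠ 0 := fun h => hs0 (by rwa [← ZMod.val_eq_zero])
        have hsvlt : s.val < n1 := ZMod.val_lt s
        have hnegval : (-s).val = n1 - s.val := by
          rw [ZMod.neg_val, if_neg hs0]
        rcases lt_trichotomy (2 * s.val) n1 with h | h | h
        · have hfs : f s = ((s.val : ℕ) : ZMod N) := if_pos h.le
          have hcond2 : ¬ 2 * (-s).val ≤ n1 := by rw [hnegval]; omega
          have : f (-s) = -f s := by
            rw [show f (-s) = -(((-(-s)).val : ℕ) : ZMod N) from if_neg hcond2, neg_neg, hfs]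
          refine Finset.mem_union_left _ (Finset.mem_union_left _ ?_)
          exact this ▸ Finset.mem_image_of_mem f (hS1neg s hs)
        · -- 2 s.val = n1 ; the involution case
          have hpar : n1 % 2 = 0 := by omega
          have hval : s.val = n1 / 2 := by omega
          have hes : e = s := by rw [he, ← hval, ZMod.natCast_zmod_val]
          have hfs : f s = c := by
            rw [show f s = ((s.val : ℕ) : ZMod N) from if_pos h.le, hval, hc]
          refine Finset.mem_union_right _ ?_
          rw [hC, if_pos ⟨hes ▸ hs, hpar⟩, Finset.mem_singleton, hfs]
        · have hfs : f s = -(((-s).val : ℕ) : ZMod N) := if_neg (by omega)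
          have hcond2 : 2 * (-s).val ≤ n1 := by rw [hnegval]; omega
          have : f (-s) = -f s := by
            rw [show f (-s) = (((-s).val : ℕ) : ZMod N) from if_pos hcond2, hfs, neg_neg]
          refine Finset.mem_union_left _ (Finset.mem_union_left _ ?_)
          exact this ▸ Finset.mem_image_of_mem f (hS1neg s hs)
      · obtain ⟨y, hy, rfl⟩ := Finset.mem_image.1 ha
        have hy0 : y ≠ 0 := fun h => hS20 (h ▸ hy)
        have hnegval : (-y).val = n2 - y.val := by rw [ZMod.neg_val, if_neg hy0]
        have hyle : y.val ≤ n2 := (ZMod.val_lt y).le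
        have hle : n1 * y.val ≤ N := by rw [hN]; exact Nat.mul_le_mul_left n1 hyle
        have : φ (-y) = -φ y := by
          show ((n1 * (-y).val : ℕ) : ZMod N) = -((n1 * y.val : ℕ) : ZMod N)
          rw [hnegval, Nat.mul_sub, ← hN, Nat.cast_sub hle, ZMod.natCast_self]
          ring
        refine Finset.mem_union_left _ (Finset.mem_union_right _ ?_)
        exact this ▸ Finset.mem_image_of_mem φ (hS2neg y hy)
    · by_cases hcond : e ∈ S1 ∧ n1 % 2 = 0
      · rw [hC, if_pos hcond, Finset.mem_singleton] at ha
        subst ha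
        rw [neg_neg]
        have heval : e.val = n1 / 2 := by
          rw [he, ZMod.val_natCast, Nat.mod_eq_of_lt (Nat.div_lt_self hn1 one_lt_two)]
        have hcond2 : 2 * e.val ≤ n1 := by rw [heval]; omega
        have : f e = c := by
          rw [show f e = ((e.val : ℕ) : ZMod N) from if_pos hcond2, heval, hc]
        exact Finset.mem_union_left _ (Finset.mem_union_left _ (this ▸ Finset.mem_image_of_mem f hcond.1))
      · rw [hC, if_neg hcond] at ha
        exact absurd ha (Finset.notMem_empty a)
  · -- cardinality
    calc ((S1.image f ∪ S2.image φ) ∪ C).card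
        ≤ (S1.image f ∪ S2.image φ).card + C.card := Finset.card_union_le _ _
      _ ≤ ((S1.image f).card + (S2.image φ).card) + C.card := by
          exact add_le_add_left (Finset.card_union_le _ _) _
      _ ≤ d1 + d2 + 1 := by
          have h1' : (S1.image f).card ≤ d1 := le_trans (Finset.card_image_le) hS1card
          have h2' : (S2.image φ).card ≤ d2 := le_trans (Finset.card_image_le) hS2card
          have h3' : C.card ≤ 1 := by
            rw [hC]; split
            · simp
            · simp
          omega
  · -- coverage
    intro x
    obtain ⟨l1, hl1len, hl1mem, hl1sum⟩ := hS1cov (π x)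
    set lA : List (ZMod N) := l1.map f with hlA
    have hπlA : π lA.sum = π x := by
      rw [← hl1sum, hlA]
      rw [map_list_sum π]
      congr 1
      rw [List.map_map]
      simp only [Function.comp_def, hπf]
      exact List.map_id' l1  -- map (fun a => a) l1 = l1
    set z : ZMod N := x - lA.sum with hz
    have hπz : π z = 0 := by rw [hz, map_sub, hπlA, sub_self]
    have hzdvd : n1 ∣ z.val := by
      rw [← ZMod.natCast_eq_zero_iff]
      have : ((z.val : ℕ) : ZMod n1) = π z := by
        rw [ZMod.natCast_val, ZMod.castHom_apply]
      rw [this, hπz]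
    obtain ⟨m, hm⟩ := hzdvd
    obtain ⟨l2, hl2len, hl2mem, hl2sum⟩ := hS2cov ((m : ℕ) : ZMod n2)
    set lB : List (ZMod N) := l2.map φ with hlB
    have hlBsum : lB.sum = z := by
      rw [hlB, hφsum, hl2sum]
      show ((n1 * ((m : ZMod n2)).val : ℕ) : ZMod N) = z
      rw [ZMod.val_natCast, hmod, ← hm, ZMod.natCast_zmod_val]
    refine ⟨lA ++ lB, ?_, ?_, ?_⟩
    · rw [List.length_append, hlA, hlB, List.length_map, List.length_map]
      omega
    · intro a hamem
      rcases List.mem_append.1 hamem with h | h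
      · obtain ⟨s, hs, rfl⟩ := List.mem_map.1 h
        exact Finset.mem_union_left _ (Finset.mem_union_left _
          (Finset.mem_image_of_mem f (hl1mem s hs)))
      · obtain ⟨y, hy, rfl⟩ := List.mem_map.1 h
        exact Finset.mem_union_left _ (Finset.mem_union_right _
          (Finset.mem_image_of_mem φ (hl2mem y hy)))
    · rw [List.sum_append, hlBsum, hz]; ring

lemma hasUndirCirc_one (d k : ℕ) : HasUndirCirc 1 d k := by
  refine ⟨∅, by simp, by simp, by simp, fun x => ⟨[], by simp, by simp, Subsingleton.elim _ _⟩⟩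

lemma hasUndirCirc_bound {n d k : ℕ} (h : HasUndirCirc n d k) : n ≤ (d + 1) ^ k := by
  obtain ⟨S, -, -, hcard, hcov⟩ := h
  -- reachable sums in ≤ j steps
  let T : ℕ → Finset (ZMod n) := fun j => Nat.rec {0} (fun _ Tj => Tj ∪ Finset.image₂ (· + ·) S Tj) j
  have hT0 : ∀ j, (0 : ZMod n) ∈ T j := by
    intro j
    induction j with
    | zero => simp [T]
    | succ j ih => exact Finset.mem_union_left _ ih
  have hTsum : ∀ j (l : List (ZMod n)), l.length ≤ j → (∀ a ∈ l, a ∈ S) → l.sum ∈ T j := by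
    intro j
    induction j with
    | zero =>
      intro l hl _
      rw [List.length_eq_zero_iff.1 (Nat.le_zero.1 hl)]
      simp [T]
    | succ j ih =>
      intro l hl hmem
      match l with
      | [] => simpa using hT0 (j + 1)
      | a :: t =>
        have ht : t.sum ∈ T j := ih t (by simpa using Nat.succ_le_succ_iff.1 hl)
          (fun b hb => hmem b (List.mem_cons_of_mem a hb))
        refine Finset.mem_union_right _ ?_
        rw [List.sum_cons]
        exact Finset.mem_image₂_of_mem (hmem a List.mem_cons_self) ht
  have hTcard : ∀ j, (T j).card ≤ (d + 1) ^ j := by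
    intro j
    induction j with
    | zero => simp [T]
    | succ j ih =>
      calc (T (j + 1)).card ≤ (T j).card + (Finset.image₂ (· + ·) S (T j)).card :=
            Finset.card_union_le _ _
        _ ≤ (T j).card + S.card * (T j).card := by
            exact add_le_add_right (Finset.card_image₂_le _ _ _) _
        _ ≤ (d + 1) ^ j + d * (d + 1) ^ j := by
            have := Nat.mul_le_mul hcard ih
            have h2 := Nat.mul_le_mul_left S.card ih
            nlinarith [Nat.mul_le_mul hcard ih]
        _ = (d + 1) ^ (j + 1) := by ring
  have huniv : ∀ x : ZMod n, x ∈ T k := by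
    intro x
    obtain ⟨l, h1, h2, h3⟩ := hcov x
    exact h3 ▸ hTsum k l h1 h2
  rcases Nat.eq_zero_or_pos n with rfl | hn
  · exfalso
    haveI : Infinite (ZMod 0) := (inferInstance : Infinite ℤ)
    exact Set.infinite_univ ((T k).finite_toSet.subset (fun x _ => huniv x))
  · haveI : NeZero n := ⟨hn.ne'⟩
    calc n = Fintype.card (ZMod n) := (ZMod.card n).symm
      _ ≤ (T k).card := Finset.card_le_card (fun x _ => huniv x) |>.trans_eq' (by
            rw [← Finset.card_univ])
      _ ≤ (d + 1) ^ k := hTcard k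

lemma CC_bddAbove (d k : ℕ) : BddAbove {n | HasUndirCirc n d k} :=
  ⟨(d + 1) ^ k, fun _ hn => hasUndirCirc_bound hn⟩

lemma CC_mem (d k : ℕ) : HasUndirCirc (CC d k) d k :=
  Nat.sSup_mem (s := {n | HasUndirCirc n d k}) ⟨1, hasUndirCirc_one d k⟩ (CC_bddAbove d k)

lemma CC_pos (d k : ℕ) : 1 ≤ CC d k :=
  le_csSup (s := {n | HasUndirCirc n d k}) (CC_bddAbove d k) (hasUndirCirc_one d k)

lemma CC_le (d k : ℕ) : CC d k ≤ (d + 1) ^ k :=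
  csSup_le (s := {n | HasUndirCirc n d k}) ⟨1, hasUndirCirc_one d k⟩ (fun _ hn => hasUndirCirc_bound hn)

lemma CC_mono {d d' : ℕ} (k : ℕ) (h : d ≤ d') : CC d k ≤ CC d' k := by
  apply csSup_le_csSup (s := {n | HasUndirCirc n d k}) (t := {n | HasUndirCirc n d' k})
    (CC_bddAbove d' k) ⟨1, hasUndirCirc_one d k⟩
  rintro n ⟨S, h0, hneg, hcard, hcov⟩
  exact ⟨S, h0, hneg, hcard.trans h, hcov⟩

lemma floor_tendsto_atTop (j k : ℕ) (hj : 0 < j) (hk : 0 < k) :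
    Tendsto (fun D : ℕ => j * (D - 1) / k) atTop atTop := by
  rw [tendsto_atTop]
  intro b
  rw [eventually_atTop]
  refine ⟨k * b + 1, fun D hD => ?_⟩
  rw [Nat.le_div_iff_mul_le hk]
  have h1 : k * b ≤ D - 1 := by omega
  have h2 : D - 1 ≤ j * (D - 1) := Nat.le_mul_of_pos_left _ hj
  calc b * k = k * b := Nat.mul_comm _ _
    _ ≤ D - 1 := h1
    _ ≤ j * (D - 1) := h2

lemma floor_ratio_tendsto (j k : ℕ) (hj : 0 < j) (hk : 0 < k) :
    Tendsto (fun D : ℕ => ((j * (D - 1) / k : ℕ) : ℝ) / (D : ℝ)) atTop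
      (nhds ((j : ℝ) / (k : ℝ))) := by
  have hkR : (0 : ℝ) < (k : ℝ) := by exact_mod_cast hk
  have hlow : Tendsto (fun D : ℕ => (j : ℝ) / k - (((j : ℝ) + k) / k) * (1 / (D : ℝ)))
      atTop (nhds ((j : ℝ) / k)) := by
    have h0 : Tendsto (fun _ : ℕ => (j : ℝ) / k) atTop (nhds ((j : ℝ) / k)) := tendsto_const_nhds
    have h1 : Tendsto (fun _ : ℕ => ((j : ℝ) + k) / k) atTop (nhds (((j : ℝ) + k) / k)) :=
      tendsto_const_nhds
    have := h0.sub (h1.mul tendsto_one_div_atTop_nhds_zero_nat)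
    simpa using this
  refine tendsto_of_tendsto_of_tendsto_of_le_of_le' hlow tendsto_const_nhds ?_ ?_
  · -- lower bound eventually
    filter_upwards [eventually_ge_atTop 1] with D hD
    have hDR : (1 : ℝ) ≤ (D : ℝ) := by exact_mod_cast hD
    have hDpos : (0 : ℝ) < (D : ℝ) := by linarith
    set q : ℕ := j * (D - 1) / k with hq
    have hdm := Nat.div_add_mod (j * (D - 1)) k
    have hmlt := Nat.mod_lt (j * (D - 1)) hk
    -- cast facts
    have hcast : ((j * (D - 1) : ℕ) : ℝ) = (j : ℝ) * ((D : ℝ) - 1) := by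
      push_cast [Nat.cast_sub hD]
      ring
    have hkey : (j : ℝ) * (D : ℝ) - ((j : ℝ) + k) ≤ (k : ℝ) * (q : ℝ) := by
      have h1 : (k : ℝ) * (q : ℝ) + ((j * (D - 1) % k : ℕ) : ℝ) = (j : ℝ) * ((D : ℝ) - 1) := by
        rw [← hcast]
        exact_mod_cast hdm
      have h2 : ((j * (D - 1) % k : ℕ) : ℝ) < (k : ℝ) := by exact_mod_cast hmlt
      have hjR : (0 : ℝ) ≤ (j : ℝ) := by positivity
      nlinarith
    have hfrac : (j : ℝ) / k - (((j : ℝ) + k) / k) * (1 / (D : ℝ))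
        = ((j : ℝ) * D - ((j : ℝ) + k)) / ((k : ℝ) * D) := by
      field_simp
    rw [hfrac, div_le_div_iff₀ (by positivity) hDpos]
    nlinarith [mul_le_mul_of_nonneg_right hkey hDpos.le]
  · -- upper bound eventually
    filter_upwards [eventually_ge_atTop 1] with D hD
    have hDR : (1 : ℝ) ≤ (D : ℝ) := by exact_mod_cast hD
    have hDpos : (0 : ℝ) < (D : ℝ) := by linarith
    set q : ℕ := j * (D - 1) / k with hq
    have h1 : (k : ℝ) * (q : ℝ) ≤ (j : ℝ) * ((D : ℝ) - 1) := by
      have := Nat.div_mul_le_self (j * (D - 1)) k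
      have h' : (q * k : ℕ) ≤ j * (D - 1) := Nat.div_mul_le_self _ _
      have h'' : ((q * k : ℕ) : ℝ) ≤ ((j * (D - 1) : ℕ) : ℝ) := by exact_mod_cast h'
      push_cast [Nat.cast_sub hD] at h''
      nlinarith [h'']
    rw [div_le_div_iff₀ hDpos hkR]
    have hjR : (0 : ℝ) ≤ (j : ℝ) := by positivity
    nlinarith

lemma CC_stitch (d1 d2 k1 k2 : ℕ) :
    CC d1 k1 * CC d2 k2 ≤ CC (d1 + d2 + 1) (k1 + k2) :=
  le_csSup (s := {n | HasUndirCirc n (d1 + d2 + 1) (k1 + k2)}) (CC_bddAbove _ _)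
    (stitch (CC_pos d1 k1) (CC_pos d2 k2) (CC_mem d1 k1) (CC_mem d2 k2))

lemma f_nonneg (k : ℕ) (d : ℕ) : (0 : ℝ) ≤ (CC d k : ℝ) / (d : ℝ) ^ k := by positivity

lemma f_le (k : ℕ) (hk : 1 ≤ k) (d : ℕ) : (CC d k : ℝ) / (d : ℝ) ^ k ≤ 2 ^ k := by
  rcases Nat.eq_zero_or_pos d with rfl | hd
  · rw [Nat.cast_zero, zero_pow (by omega : k ≠ 0), div_zero]
    positivity
  · have hdR : (1 : ℝ) ≤ (d : ℝ) := by exact_mod_cast hd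
    have h1 : (CC d k : ℝ) ≤ ((d : ℝ) + 1) ^ k := by
      have h2 : ((CC d k : ℕ) : ℝ) ≤ (((d + 1) ^ k : ℕ) : ℝ) := by exact_mod_cast CC_le d k
      push_cast at h2
      exact h2
    have h2 : ((d : ℝ) + 1) ^ k ≤ (2 * (d : ℝ)) ^ k :=
      pow_le_pow_left₀ (by positivity) (by linarith) k
    rw [div_le_iff₀ (by positivity)]
    calc (CC d k : ℝ) ≤ ((d : ℝ) + 1) ^ k := h1
      _ ≤ (2 * (d : ℝ)) ^ k := h2
      _ = 2 ^ k * (d : ℝ) ^ k := mul_pow _ _ _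

lemma f_boundedUnder (k : ℕ) (hk : 1 ≤ k) :
    IsBoundedUnder (· ≤ ·) atTop (fun d : ℕ => (CC d k : ℝ) / (d : ℝ) ^ k) :=
  isBoundedUnder_of ⟨2 ^ k, fun d => f_le k hk d⟩

lemma f_coboundedUnder (k : ℕ) (hk : 1 ≤ k) :
    IsCoboundedUnder (· ≥ ·) atTop (fun d : ℕ => (CC d k : ℝ) / (d : ℝ) ^ k) :=
  (f_boundedUnder k hk).isCoboundedUnder_ge

lemma f_boundedUnder_ge (k : ℕ) :
    IsBoundedUnder (· ≥ ·) atTop (fun d : ℕ => (CC d k : ℝ) / (d : ℝ) ^ k) :=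
  isBoundedUnder_of ⟨0, fun d => f_nonneg k d⟩

lemma L_nonneg (k : ℕ) (hk : 1 ≤ k) : 0 ≤ L k :=
  le_liminf_of_le (f_coboundedUnder k hk) (Eventually.of_forall (fun d => f_nonneg k d))

theorem stmt_12 (k1 k2 : ℕ) (hk1 : 1 ≤ k1) (hk2 : 1 ≤ k2) :
    L k1 * L k2 * (k1 : ℝ) ^ k1 * (k2 : ℝ) ^ k2 / ((k1 : ℝ) + k2) ^ (k1 + k2)
      ≤ L (k1 + k2) := by
  set k := k1 + k2 with hkdef
  have hk : 1 ≤ k := by omega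
  have hkpos : 0 < k := hk
  set a := L k1 with ha
  set b := L k2 with hb
  have ha0 : 0 ≤ a := L_nonneg k1 hk1
  have hb0 : 0 ≤ b := L_nonneg k2 hk2
  set c : ℝ := ((k1 : ℝ) / k) ^ k1 * ((k2 : ℝ) / k) ^ k2 with hcdef
  have hkR : (0 : ℝ) < (k : ℝ) := by exact_mod_cast hkpos
  have hk1R : (0 : ℝ) < (k1 : ℝ) := by exact_mod_cast hk1
  have hk2R : (0 : ℝ) < (k2 : ℝ) := by exact_mod_cast hk2
  have hc0 : 0 < c := by positivity
  have hck : ((k1 : ℝ) + k2) = (k : ℝ) := by rw [hkdef]; push_cast; ring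
  have hgoal : a * b * (k1 : ℝ) ^ k1 * (k2 : ℝ) ^ k2 / ((k1 : ℝ) + k2) ^ (k1 + k2)
      = a * b * c := by
    rw [hck, hcdef, div_pow, div_pow, div_mul_div_comm, ← pow_add, ← hkdef]
    field_simp
  rw [hgoal]
  have hgco := f_coboundedUnder k hk
  have hgnonneg : (0:ℝ) ≤ L k := L_nonneg k hk
  apply le_of_forall_lt_imp_le_of_dense
  intro r hr
  rcases le_or_gt r 0 with hr0 | hr0
  · exact hr0.trans hgnonneg
  have hapos : 0 < a := by
    rcases ha0.lt_or_eq with h | h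
    · exact h
    · exfalso; rw [← h] at hr; simp at hr; linarith
  have hbpos : 0 < b := by
    rcases hb0.lt_or_eq with h | h
    · exact h
    · exfalso; rw [← h] at hr; simp at hr; nlinarith
  obtain ⟨ε, hεr, hεa, hεb, hεc, hε0⟩ :
      ∃ ε : ℝ, r < (a - ε) * (b - ε) * (c - ε) ∧ ε < a ∧ ε < b ∧ ε < c ∧ 0 < ε := by
    have cont : Tendsto (fun ε : ℝ => (a - ε) * (b - ε) * (c - ε)) (nhds 0)
        (nhds (a * b * c)) := by
      have hcont : ContinuousAt (fun ε : ℝ => (a - ε) * (b - ε) * (c - ε)) 0 := by fun_prop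
      simpa using hcont.tendsto
    have cont' : Tendsto (fun ε : ℝ => (a - ε) * (b - ε) * (c - ε)) (nhdsWithin 0 (Set.Ioi 0))
        (nhds (a * b * c)) := cont.mono_left nhdsWithin_le_nhds
    have h1 : ∀ᶠ ε in nhdsWithin (0:ℝ) (Set.Ioi 0), r < (a - ε) * (b - ε) * (c - ε) :=
      cont'.eventually (eventually_gt_nhds hr)
    have h2 : ∀ᶠ ε in nhdsWithin (0:ℝ) (Set.Ioi 0), ε < a :=
      nhdsWithin_le_nhds (eventually_lt_nhds hapos)
    have h3 : ∀ᶠ ε in nhdsWithin (0:ℝ) (Set.Ioi 0), ε < b :=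
      nhdsWithin_le_nhds (eventually_lt_nhds hbpos)
    have h4 : ∀ᶠ ε in nhdsWithin (0:ℝ) (Set.Ioi 0), ε < c :=
      nhdsWithin_le_nhds (eventually_lt_nhds hc0)
    have h5 : ∀ᶠ ε in nhdsWithin (0:ℝ) (Set.Ioi 0), 0 < ε :=
      eventually_mem_nhdsWithin
    exact ((((h1.and h2).and h3).and h4).and h5).exists.imp
      (fun ε h => ⟨h.1.1.1.1, h.1.1.1.2, h.1.1.2, h.1.2, h.2⟩)
  set d1 : ℕ → ℕ := fun D => k1 * (D - 1) / k with hd1def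
  set d2 : ℕ → ℕ := fun D => k2 * (D - 1) / k with hd2def
  have htd1 : Tendsto d1 atTop atTop := floor_tendsto_atTop k1 k hk1 hkpos
  have htd2 : Tendsto d2 atTop atTop := floor_tendsto_atTop k2 k hk2 hkpos
  have hrt1 : Tendsto (fun D : ℕ => ((d1 D : ℕ) : ℝ) / (D : ℝ)) atTop (nhds ((k1 : ℝ) / k)) :=
    floor_ratio_tendsto k1 k hk1 hkpos
  have hrt2 : Tendsto (fun D : ℕ => ((d2 D : ℕ) : ℝ) / (D : ℝ)) atTop (nhds ((k2 : ℝ) / k)) :=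
    floor_ratio_tendsto k2 k hk2 hkpos
  have hh : Tendsto (fun D : ℕ => (((d1 D : ℕ) : ℝ) / (D : ℝ)) ^ k1
      * (((d2 D : ℕ) : ℝ) / (D : ℝ)) ^ k2) atTop (nhds c) :=
    (hrt1.pow k1).mul (hrt2.pow k2)
  have E1 : ∀ᶠ D : ℕ in atTop, a - ε < (CC (d1 D) k1 : ℝ) / ((d1 D : ℕ) : ℝ) ^ k1 :=
    htd1.eventually (eventually_lt_of_lt_liminf (show a - ε < L k1 by rw [← ha]; linarith)
      (f_boundedUnder_ge k1))
  have E2 : ∀ᶠ D : ℕ in atTop, b - ε < (CC (d2 D) k2 : ℝ) / ((d2 D : ℕ) : ℝ) ^ k2 :=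
    htd2.eventually (eventually_lt_of_lt_liminf (show b - ε < L k2 by rw [← hb]; linarith)
      (f_boundedUnder_ge k2))
  have E3 : ∀ᶠ D : ℕ in atTop, c - ε < (((d1 D : ℕ) : ℝ) / (D : ℝ)) ^ k1
      * (((d2 D : ℕ) : ℝ) / (D : ℝ)) ^ k2 :=
    hh.eventually (eventually_gt_nhds (by linarith))
  have E5 : ∀ᶠ D : ℕ in atTop, 1 ≤ d1 D := htd1.eventually (eventually_ge_atTop 1)
  have E6 : ∀ᶠ D : ℕ in atTop, 1 ≤ d2 D := htd2.eventually (eventually_ge_atTop 1)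
  apply le_liminf_of_le hgco
  filter_upwards [eventually_ge_atTop 1, E1, E2, E3, E5, E6] with D hD h1' h2' h3' h5 h6
  have hsum : d1 D + d2 D + 1 ≤ D := by
    have h := Nat.add_div_le_add_div (k1 * (D - 1)) (k2 * (D - 1)) k
    rw [← Nat.add_mul, ← hkdef, Nat.mul_div_cancel_left _ hkpos] at h
    have h2 : d1 D + d2 D ≤ D - 1 := h
    omega
  have hprod : CC (d1 D) k1 * CC (d2 D) k2 ≤ CC D k :=
    (CC_stitch (d1 D) (d2 D) k1 k2).trans (CC_mono k hsum)
  have hDR : (1 : ℝ) ≤ (D : ℝ) := by exact_mod_cast hD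
  have hDpos : (0 : ℝ) < (D : ℝ) := by linarith
  have hd1R : (0 : ℝ) < ((d1 D : ℕ) : ℝ) := by exact_mod_cast h5
  have hd2R : (0 : ℝ) < ((d2 D : ℕ) : ℝ) := by exact_mod_cast h6
  set n1 : ℕ := CC (d1 D) k1 with hn1
  set n2 : ℕ := CC (d2 D) k2 with hn2
  have hide : ((n1 : ℝ) * (n2 : ℝ)) / (D : ℝ) ^ k
      = ((n1 : ℝ) / ((d1 D : ℕ) : ℝ) ^ k1) * ((n2 : ℝ) / ((d2 D : ℕ) : ℝ) ^ k2)
        * ((((d1 D : ℕ) : ℝ) / (D : ℝ)) ^ k1 * (((d2 D : ℕ) : ℝ) / (D : ℝ)) ^ k2) := by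
    rw [hkdef, pow_add, div_pow, div_pow]
    field_simp
    try ring
  have hstep1 : ((n1 : ℝ) * (n2 : ℝ)) / (D : ℝ) ^ k ≤ (CC D k : ℝ) / (D : ℝ) ^ k := by
    apply div_le_div_of_nonneg_right ?_ (by positivity)
    exact_mod_cast hprod
  have hstep2 : (a - ε) * (b - ε) * (c - ε)
      ≤ ((n1 : ℝ) / ((d1 D : ℕ) : ℝ) ^ k1) * ((n2 : ℝ) / ((d2 D : ℕ) : ℝ) ^ k2)
        * ((((d1 D : ℕ) : ℝ) / (D : ℝ)) ^ k1 * (((d2 D : ℕ) : ℝ) / (D : ℝ)) ^ k2) := by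
    have p1 : 0 ≤ a - ε := by linarith
    have p2 : 0 ≤ b - ε := by linarith
    have p3 : 0 ≤ c - ε := by linarith
    apply mul_le_mul (mul_le_mul h1'.le h2'.le p2 (by positivity)) h3'.le p3 (by positivity)
  have hfin := (hide ▸ hstep2).trans hstep1
  linarith
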